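/- With A uniformly elliptic and Lipschitz, g = A^{-1}, σ(x,t)² = Σ g_{ij}(0,t)x_i x_j, one has ⟨A(x,t)∇σ, ∇σ⟩ = 1 + O(σ): there exists C > 0 such that |⟨A(x,t)∇_xσ(x,t), ∇_xσ(x,t)⟩ - 1| ≤ Cσ(x,t) for all small |x| ≠ 0. -/

import Mathlib

open scoped BigOperators Matrix

private lemma dot_expand {n : ℕ} (M : Matrix (Fin n) (Fin n) ℝ) (u v : Fin n → ℝ) :
    u ⬝ᵥ M.mulVec v = ∑ i, ∑ j, M i j * u i * v j := by
  simp only [dotProduct, Matrix.mulVec, Finset.mul_sum]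
  exact Finset.sum_congr rfl fun i _ => Finset.sum_congr rfl fun j _ => by ring

private lemma dot_symm {n : ℕ} (M : Matrix (Fin n) (Fin n) ℝ) (hs : M.IsSymm)
    (u v : Fin n → ℝ) : u ⬝ᵥ M.mulVec v = v ⬝ᵥ M.mulVec u := by
  have hs' : Mᵀ = M := hs
  rw [Matrix.dotProduct_mulVec, ← Matrix.mulVec_transpose, hs', dotProduct_comm]

private lemma cs_bilinear {n : ℕ} (M : Matrix (Fin n) (Fin n) ℝ) (hs : M.IsSymm)
    (hpos : ∀ v : Fin n → ℝ, 0 ≤ v ⬝ᵥ M.mulVec v) (u v : Fin n → ℝ) :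
    (u ⬝ᵥ M.mulVec v) ^ 2 ≤ (u ⬝ᵥ M.mulVec u) * (v ⬝ᵥ M.mulVec v) := by
  have key : ∀ t : ℝ, 0 ≤ (v ⬝ᵥ M.mulVec v) * (t * t)
      + (2 * (u ⬝ᵥ M.mulVec v)) * t + (u ⬝ᵥ M.mulVec u) := by
    intro t
    have h := hpos (u + t • v)
    have e : (u + t • v) ⬝ᵥ M.mulVec (u + t • v)
        = (v ⬝ᵥ M.mulVec v) * (t * t) + (2 * (u ⬝ᵥ M.mulVec v)) * t + (u ⬝ᵥ M.mulVec u) := by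
      rw [Matrix.mulVec_add, Matrix.mulVec_smul]
      simp only [add_dotProduct, dotProduct_add, smul_dotProduct,
        dotProduct_smul, smul_eq_mul]
      rw [dot_symm M hs v u]
      ring
    linarith [e ▸ h]
  have hd := discrim_le_zero key
  rw [discrim] at hd
  nlinarith [hd]

/-- With A uniformly elliptic, symmetric, Lipschitz, g = A⁻¹,
σ(x,t)² = Σ g_{ij}(0,t)x_i x_j, ∂_kσ = (Σ_m g_{km}(0,t)x_m)/σ and
⟨A∇σ,∇σ⟩ = Σ_{i,j} a_{ij} ∂_iσ ∂_jσ, one has ⟨A∇σ,∇σ⟩ = 1 + O(σ). -/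
theorem stmt7 (n : ℕ) (Λ K : ℝ) (hΛ : 1 < Λ) (hK : 0 < K)
    (A : EuclideanSpace ℝ (Fin n) → ℝ → Matrix (Fin n) (Fin n) ℝ)
    (hsymm : ∀ x t, (A x t).IsSymm)
    (hell : ∀ x t (v : Fin n → ℝ),
      Λ⁻¹ * (∑ i, v i ^ 2) ≤ v ⬝ᵥ (A x t).mulVec v ∧
      v ⬝ᵥ (A x t).mulVec v ≤ Λ * (∑ i, v i ^ 2))
    (hlip : ∀ x y t s (i j : Fin n),
      |A x t i j - A y s i j| ≤ K * (‖x - y‖ + |t - s|))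
    (σ : EuclideanSpace ℝ (Fin n) → ℝ → ℝ)
    (hσ : ∀ x t, σ x t = Real.sqrt (∑ i, ∑ j, (A 0 t)⁻¹ i j * x i * x j))
    (Dσ : Fin n → EuclideanSpace ℝ (Fin n) → ℝ → ℝ)
    (hDσ : ∀ k x t, Dσ k x t = (∑ m, (A 0 t)⁻¹ k m * x m) / σ x t)
 :
    ∃ C > (0 : ℝ), ∃ r > (0 : ℝ),
      ∀ (x : EuclideanSpace ℝ (Fin n)) (t : ℝ), x ≠ 0 → ‖x‖ ≤ r →
        |(∑ i, ∑ j, A x t i j * Dσ i x t * Dσ j x t) - 1| ≤ C * σ x t := by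
  have hΛ0 : (0:ℝ) < Λ := one_pos.trans hΛ
  refine ⟨K * (n : ℝ) * Λ ^ 2 + 1, by positivity, 1, one_pos, ?_⟩
  intro x t hx hxr
  set M : Matrix (Fin n) (Fin n) ℝ := A 0 t with hM
  have hs : M.IsSymm := hsymm 0 t
  have hlow : ∀ v : Fin n → ℝ, Λ⁻¹ * (∑ i, v i ^ 2) ≤ v ⬝ᵥ M.mulVec v := fun v => (hell 0 t v).1
  have hupp : ∀ v : Fin n → ℝ, v ⬝ᵥ M.mulVec v ≤ Λ * (∑ i, v i ^ 2) := fun v => (hell 0 t v).2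
  have hpos0 : ∀ v : Fin n → ℝ, 0 ≤ v ⬝ᵥ M.mulVec v := fun v =>
    le_trans (by positivity) (hlow v)
  -- positive definiteness and invertibility
  have hherm : M.IsHermitian := by
    rw [Matrix.IsHermitian, Matrix.conjTranspose_eq_transpose_of_trivial]; exact hs
  have hpd : M.PosDef := by
    refine Matrix.posDef_iff_dotProduct_mulVec.mpr ⟨hherm, fun v hv => ?_⟩
    obtain ⟨i, hi⟩ := Function.ne_iff.mp hv
    have hsum : 0 < ∑ j, v j ^ 2 :=
      Finset.sum_pos' (fun j _ => sq_nonneg _)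
        ⟨i, Finset.mem_univ i, lt_of_le_of_ne (sq_nonneg _) (Ne.symm (pow_ne_zero 2 hi))⟩
    have h0 : 0 < Λ⁻¹ * ∑ j, v j ^ 2 := mul_pos (inv_pos.mpr hΛ0) hsum
    simpa [star_trivial] using lt_of_lt_of_le h0 (hlow v)
  have hdet : IsUnit M.det := isUnit_iff_ne_zero.mpr hpd.det_pos.ne'
  have hMg : M * M⁻¹ = 1 := Matrix.mul_nonsing_inv M hdet
  set x' : Fin n → ℝ := fun i => x i with hx'
  set y : Fin n → ℝ := M⁻¹.mulVec x' with hy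
  have hxy : M.mulVec y = x' := by
    rw [hy, Matrix.mulVec_mulVec, hMg, Matrix.one_mulVec]
  have hyne : y ≠ 0 := by
    intro h
    apply hx
    have hx0 : x' = 0 := by rw [← hxy, h, Matrix.mulVec_zero]
    ext i
    exact congrFun hx0 i
  set q : ℝ := y ⬝ᵥ M.mulVec y with hqdef
  have hq1 : x' ⬝ᵥ y = q := by rw [← hxy, dotProduct_comm]
  have hs2pos : 0 < ∑ i, y i ^ 2 := by
    obtain ⟨i, hi⟩ := Function.ne_iff.mp hyne
    exact Finset.sum_pos' (fun j _ => sq_nonneg _)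
      ⟨i, Finset.mem_univ i, lt_of_le_of_ne (sq_nonneg _) (Ne.symm (pow_ne_zero 2 hi))⟩
  have hqpos : 0 < q := lt_of_lt_of_le (mul_pos (inv_pos.mpr hΛ0) hs2pos) (hlow y)
  have hσq : σ x t = Real.sqrt q := by
    rw [hσ]
    congr 1
    calc (∑ i, ∑ j, (A 0 t)⁻¹ i j * x i * x j)
        = x' ⬝ᵥ M⁻¹.mulVec x' := (dot_expand M⁻¹ x' x').symm
      _ = x' ⬝ᵥ y := rfl
      _ = q := hq1
  have hσpos : 0 < σ x t := by rw [hσq]; exact Real.sqrt_pos.mpr hqpos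
  have hσsq : σ x t ^ 2 = q := by rw [hσq, Real.sq_sqrt hqpos.le]
  have hD : ∀ k, Dσ k x t = y k / σ x t := by
    intro k
    rw [hDσ, hy]
    rfl
  clear_value q y x' M
  obtain ⟨T, hTdef⟩ : ∃ T : ℝ, T = y ⬝ᵥ (A x t).mulVec y := ⟨_, rfl⟩
  have hT : (∑ i, ∑ j, A x t i j * (y i / σ x t) * (y j / σ x t)) = T / q := by
    rw [hTdef, dot_expand, Finset.sum_div]
    refine Finset.sum_congr rfl fun i _ => ?_
    rw [Finset.sum_div]
    refine Finset.sum_congr rfl fun j _ => ?_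
    rw [← hσsq]
    ring
  have hE : T - q = ∑ i, ∑ j, (A x t i j - M i j) * y i * y j := by
    rw [hTdef, hqdef, dot_expand, dot_expand, ← Finset.sum_sub_distrib]
    refine Finset.sum_congr rfl fun i _ => ?_
    rw [← Finset.sum_sub_distrib]
    exact Finset.sum_congr rfl fun j _ => by ring
  -- entrywise Lipschitz bound
  have hEb : |T - q| ≤ K * ‖x‖ * (∑ i, |y i|) ^ 2 := by
    rw [hE]
    calc |∑ i, ∑ j, (A x t i j - M i j) * y i * y j|
        ≤ ∑ i, ∑ j, |(A x t i j - M i j) * y i * y j| :=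
          (Finset.abs_sum_le_sum_abs _ _).trans
            (Finset.sum_le_sum fun i _ => Finset.abs_sum_le_sum_abs _ _)
      _ ≤ ∑ i, ∑ j, (K * ‖x‖) * (|y i| * |y j|) := by
          refine Finset.sum_le_sum fun i _ => Finset.sum_le_sum fun j _ => ?_
          rw [abs_mul, abs_mul, mul_assoc]
          have hb : |A x t i j - M i j| ≤ K * ‖x‖ := by
            rw [hM]
            simpa using hlip x 0 t t i j
          exact mul_le_mul_of_nonneg_right hb (by positivity)
      _ = K * ‖x‖ * (∑ i, |y i|) ^ 2 := by
          rw [sq, Finset.sum_mul_sum, Finset.mul_sum]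
          exact Finset.sum_congr rfl fun i _ => by rw [Finset.mul_sum]
  have hs1 : (∑ i, |y i|) ^ 2 ≤ (n : ℝ) * ∑ i, y i ^ 2 := by
    have h := sq_sum_le_card_mul_sum_sq (s := (Finset.univ : Finset (Fin n))) (f := fun i => |y i|)
    simpa [sq_abs] using h
  have hs2q : (∑ i, y i ^ 2) ≤ Λ * q := by
    have h : Λ⁻¹ * (∑ i, y i ^ 2) ≤ q := hqdef ▸ hlow y
    nlinarith [mul_inv_cancel₀ hΛ0.ne']
  have hnx : 0 < ‖x‖ := norm_pos_iff.mpr hx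
  have hxs : ‖x‖ ^ 2 = ∑ i, x' i ^ 2 := by
    rw [EuclideanSpace.norm_eq, Real.sq_sqrt (by positivity)]
    simp [hx', Real.norm_eq_abs, sq_abs]
  have hxq : ‖x‖ ^ 2 ≤ Λ * q := by
    have hcs := cs_bilinear M hs hpos0 x' y
    rw [← hqdef, hxy] at hcs
    have h1 : x' ⬝ᵥ x' = ‖x‖ ^ 2 := by
      rw [hxs]
      exact Finset.sum_congr rfl fun i _ => (sq (x' i)).symm
    have h2 : x' ⬝ᵥ M.mulVec x' ≤ Λ * ‖x‖ ^ 2 := by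
      rw [hxs]; exact hupp x'
    rw [h1] at hcs
    have h4 : ‖x‖ ^ 2 * ‖x‖ ^ 2 ≤ (Λ * q) * ‖x‖ ^ 2 := by
      calc ‖x‖ ^ 2 * ‖x‖ ^ 2 = (‖x‖ ^ 2) ^ 2 := by ring
        _ ≤ (x' ⬝ᵥ M.mulVec x') * q := hcs
        _ ≤ (Λ * ‖x‖ ^ 2) * q := mul_le_mul_of_nonneg_right h2 hqpos.le
        _ = (Λ * q) * ‖x‖ ^ 2 := by ring
    exact le_of_mul_le_mul_right h4 (by positivity)
  have hxσ : ‖x‖ ≤ Λ * σ x t := by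
    have hsq : ‖x‖ ^ 2 ≤ (Λ * σ x t) ^ 2 := by
      calc ‖x‖ ^ 2 ≤ Λ * q := hxq
        _ = Λ * σ x t ^ 2 := by rw [hσsq]
        _ ≤ (Λ * σ x t) ^ 2 := by nlinarith [hΛ, sq_nonneg (σ x t)]
    calc ‖x‖ = Real.sqrt (‖x‖ ^ 2) := (Real.sqrt_sq (norm_nonneg x)).symm
      _ ≤ Real.sqrt ((Λ * σ x t) ^ 2) := Real.sqrt_le_sqrt hsq
      _ = Λ * σ x t := Real.sqrt_sq (by positivity)
  -- final assembly
  simp only [hD]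
  rw [hT]
  have h1 : T / q - 1 = (T - q) / q := by field_simp
  rw [h1, abs_div, abs_of_pos hqpos, div_le_iff₀ hqpos]
  have hσq0 : 0 ≤ σ x t * q := le_of_lt (mul_pos hσpos hqpos)
  calc |T - q| ≤ K * ‖x‖ * (∑ i, |y i|) ^ 2 := hEb
    _ ≤ K * (Λ * σ x t) * ((n : ℝ) * (Λ * q)) := by
        have hb2 : (∑ i, |y i|) ^ 2 ≤ (n : ℝ) * (Λ * q) :=
          hs1.trans (mul_le_mul_of_nonneg_left hs2q (Nat.cast_nonneg n))
        have h3 : K * ‖x‖ ≤ K * (Λ * σ x t) :=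
          mul_le_mul_of_nonneg_left hxσ hK.le
        exact mul_le_mul h3 hb2 (by positivity) (by positivity)
    _ = (K * (n : ℝ) * Λ ^ 2) * (σ x t * q) := by ring
    _ ≤ (K * (n : ℝ) * Λ ^ 2 + 1) * (σ x t * q) :=
        mul_le_mul_of_nonneg_right (by linarith) hσq0
    _ = (K * (n : ℝ) * Λ ^ 2 + 1) * σ x t * q := by ring
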